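/- For every d ≥ 1 and every d×d Hermitian matrix X with Tr(X) = 0, one has d² · ∫_{U(d)} ( Tr(U E₁₁ U* · X) )² dU = (d/(d+1)) · ‖X‖₂², where ‖X‖₂² = Tr(X²) is the squared Frobenius norm. In other words, the covariant measurement map is, up to the factor d/(d+1), an isometry on traceless Hermitian matrices. -/

import Mathlib

open MeasureTheory ProbabilityTheory Matrix
open scoped ComplexOrder

/-- The Borel (= product) σ-algebra on `d × d` complex matrices. -/
noncomputable instance matrixMeasurableSpace (d : ℕ) : MeasurableSpace (Matrix (Fin d) (Fin d) ℂ) :=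
  MeasurableSpace.pi

/-- A density matrix: positive semidefinite with trace one. -/
def IsDensityMatrix {d : ℕ} (ρ : Matrix (Fin d) (Fin d) ℂ) : Prop :=
  ρ.PosSemidef ∧ ρ.trace = 1

/-- The rank-one projection `U E_{jj} U*`. -/
noncomputable def covProj (d : ℕ) (j : Fin d) (U : Matrix.unitaryGroup (Fin d) ℂ) :
    Matrix (Fin d) (Fin d) ℂ :=
  (U : Matrix (Fin d) (Fin d) ℂ) * Matrix.single j j 1 *
    star (U : Matrix (Fin d) (Fin d) ℂ)

/-- The outcome law `μ_ρ` of the covariant measurement on the state `ρ`, built from the Haar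
probability measure `μ` on the unitary group: the distribution of `U E_{JJ} U*` where `U ~ μ`
and, conditionally on `U`, `J = j` has probability `⟨e_j, U* ρ U e_j⟩`. -/
noncomputable def covariantLaw (d : ℕ) (μ : Measure (Matrix.unitaryGroup (Fin d) ℂ))
    (ρ : Matrix (Fin d) (Fin d) ℂ) : Measure (Matrix (Fin d) (Fin d) ℂ) :=
  Measure.sum fun j : Fin d =>
    Measure.map (covProj d j)
      (μ.withDensity fun U =>
        ENNReal.ofReal
          ((star (U : Matrix (Fin d) (Fin d) ℂ) * ρ * (U : Matrix (Fin d) (Fin d) ℂ)) j j).re)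

/-- The least squares estimator `ρ̂_LS = (1/N) Σ_i ((d+1) P_i - I)`. -/
noncomputable def lsEst {Ω : Type*} (d N : ℕ) (P : Fin N → Ω → Matrix (Fin d) (Fin d) ℂ)
    (ω : Ω) : Matrix (Fin d) (Fin d) ℂ :=
  (N : ℂ)⁻¹ • ∑ i, ((d + 1 : ℂ) • P i ω - 1)

/-- Squared Frobenius norm `‖A‖₂² = Tr(A* A)`. -/
noncomputable def frobSq {d : ℕ} (A : Matrix (Fin d) (Fin d) ℂ) : ℝ :=
  (Matrix.trace (Aᴴ * A)).re

/-- Frobenius norm `‖A‖₂ = (Tr(A* A))^{1/2}`. -/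
noncomputable def frobNorm {d : ℕ} (A : Matrix (Fin d) (Fin d) ℂ) : ℝ :=
  Real.sqrt (Matrix.trace (Aᴴ * A)).re

/-- Operator norm (largest singular value) of a matrix, as the `ℓ² → ℓ²` operator norm. -/
noncomputable def opNorm {d : ℕ} (A : Matrix (Fin d) (Fin d) ℂ) : ℝ :=
  ‖LinearMap.toContinuousLinearMap (Matrix.toEuclideanLin A)‖

/-- Trace norm `‖A‖₁ = Tr|A|`: the sum of the singular values of `A`. -/
noncomputable def traceNorm {d : ℕ} (A : Matrix (Fin d) (Fin d) ℂ) : ℝ :=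
  ∑ i, Real.sqrt ((Matrix.posSemidef_conjTranspose_mul_self A).1.eigenvalues i)

/-- The rank-`r` density matrix `ρ_r = (1/r) Σ_{i=1}^r E_{ii}`. -/
noncomputable def rhoR (d r : ℕ) : Matrix (Fin d) (Fin d) ℂ :=
  (r : ℂ)⁻¹ • ∑ i : Fin d, if (i : ℕ) < r then Matrix.single i i 1 else 0

namespace CovAux

variable {d : ℕ}

lemma meas_entry (i j : Fin d) :
    Measurable (fun U : Matrix.unitaryGroup (Fin d) ℂ => (U : Matrix (Fin d) (Fin d) ℂ) i j) :=
  (measurable_pi_apply j).comp ((measurable_pi_apply i).comp measurable_subtype_coe)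

lemma meas_mul_left (V : Matrix.unitaryGroup (Fin d) ℂ) :
    Measurable (fun U : Matrix.unitaryGroup (Fin d) ℂ => V * U) := by
  apply Measurable.subtype_mk
  apply measurable_pi_lambda
  intro i
  apply measurable_pi_lambda
  intro j
  simp only [Matrix.UnitaryGroup.mul_val, Matrix.mul_apply]
  exact Finset.measurable_sum _ fun k _ => (meas_entry k j).const_mul _

/-- `|U i z|²`. -/
noncomputable def phi (z i : Fin d) (U : Matrix.unitaryGroup (Fin d) ℂ) : ℝ :=
  Complex.normSq ((U : Matrix (Fin d) (Fin d) ℂ) i z)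

lemma phi_nonneg (z i : Fin d) (U : Matrix.unitaryGroup (Fin d) ℂ) : 0 ≤ phi z i U :=
  Complex.normSq_nonneg _

lemma meas_phi (z i : Fin d) : Measurable (phi z i) :=
  Complex.continuous_normSq.measurable.comp (meas_entry i z)

lemma phi_sum (z : Fin d) (U : Matrix.unitaryGroup (Fin d) ℂ) : ∑ i, phi z i U = 1 := by
  have h := Matrix.UnitaryGroup.star_mul_self U
  have h2 := congrFun (congrFun h z) z
  simp only [Matrix.mul_apply, Matrix.star_apply, Matrix.one_apply_eq] at h2
  have h3 : (((∑ i, phi z i U : ℝ)) : ℂ) = 1 := by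
    push_cast
    rw [← h2]
    refine Finset.sum_congr rfl fun i _ => ?_
    rw [phi, Complex.normSq_eq_conj_mul_self]
    rfl
  exact_mod_cast h3

lemma phi_le_one (z i : Fin d) (U : Matrix.unitaryGroup (Fin d) ℂ) : phi z i U ≤ 1 := by
  have := phi_sum z U
  calc phi z i U ≤ ∑ j, phi z j U :=
        Finset.single_le_sum (fun j _ => phi_nonneg z j U) (Finset.mem_univ i)
    _ = 1 := this

lemma integral_rotate (μ : Measure (Matrix.unitaryGroup (Fin d) ℂ))
    (hμ : ∀ V : Matrix.unitaryGroup (Fin d) ℂ, μ.map (fun U => V * U) = μ)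
    (V : Matrix.unitaryGroup (Fin d) ℂ)
    {f : Matrix.unitaryGroup (Fin d) ℂ → ℝ} (hf : Measurable f) :
    ∫ U, f U ∂μ = ∫ U, f (V * U) ∂μ := by
  conv_lhs => rw [← hμ V]
  exact integral_map (meas_mul_left V).aemeasurable hf.aestronglyMeasurable

lemma integrable_bdd (μ : Measure (Matrix.unitaryGroup (Fin d) ℂ)) [IsProbabilityMeasure μ]
    {f : Matrix.unitaryGroup (Fin d) ℂ → ℝ} (hf : Measurable f)
    (h1 : ∀ U, ‖f U‖ ≤ 1) : Integrable f μ :=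
  (integrable_const 1).mono' hf.aestronglyMeasurable (ae_of_all _ h1)


variable {d : ℕ}

/-- The permutation unitary. -/
noncomputable def permU (σ : Equiv.Perm (Fin d)) : Matrix.unitaryGroup (Fin d) ℂ :=
  ⟨Matrix.of fun i j => if σ j = i then 1 else 0, by
    rw [Matrix.mem_unitaryGroup_iff]
    ext i j
    rw [Matrix.mul_apply, Matrix.one_apply]
    have : ∀ k : Fin d, (Matrix.of fun i j => if σ j = i then (1:ℂ) else 0) i k *
        star ((Matrix.of fun i j => if σ j = i then (1:ℂ) else 0) j k) =
        if k = σ⁻¹ i then (if i = j then 1 else 0) else 0 := by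
      intro k
      simp only [Matrix.star_apply, Matrix.of_apply]
      by_cases hk : σ k = i
      · have hk' : k = σ⁻¹ i := by rw [← hk]; simp
        by_cases hij : i = j
        · simp [hk, hk', ← hij]
        · have : σ k ≠ j := by rw [hk]; exact hij
          simp [hk, hk', this, hij]
      · have hk' : k ≠ σ⁻¹ i := fun h => hk (by rw [h]; simp)
        simp [hk, hk']
        exact fun h => absurd h hk'
    rw [Finset.sum_congr rfl fun k _ => by
      simpa using this k]
    simp⟩

lemma permU_mul_apply (σ : Equiv.Perm (Fin d)) (U : Matrix.unitaryGroup (Fin d) ℂ) (i z : Fin d) :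
    ((permU σ * U : Matrix.unitaryGroup (Fin d) ℂ) : Matrix (Fin d) (Fin d) ℂ) i z
      = (U : Matrix (Fin d) (Fin d) ℂ) (σ⁻¹ i) z := by
  show ((permU σ).1 * (U : Matrix (Fin d) (Fin d) ℂ)) i z = _
  rw [Matrix.mul_apply]
  have : ∀ k : Fin d, (permU σ).1 i k * (U : Matrix (Fin d) (Fin d) ℂ) k z
      = if k = σ⁻¹ i then (U : Matrix (Fin d) (Fin d) ℂ) k z else 0 := by
    intro k
    by_cases hk : σ k = i
    · have hk' : k = σ⁻¹ i := by rw [← hk]; simp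
      simp [permU, hk, hk']
    · have hk' : k ≠ σ⁻¹ i := fun h => hk (by rw [h]; simp)
      simp [permU, hk, hk']
      exact fun h => absurd h hk'
  rw [Finset.sum_congr rfl fun k _ => this k, Finset.sum_ite_eq']
  simp

lemma phi_permU (σ : Equiv.Perm (Fin d)) (U : Matrix.unitaryGroup (Fin d) ℂ) (i z : Fin d) :
    phi z i (permU σ * U) = phi z (σ⁻¹ i) U := by
  rw [phi, permU_mul_apply]; rfl




section had
variable (p q : Fin d)

/-- `E p p + E p q + E q p - E q q`. -/
noncomputable def hadA : Matrix (Fin d) (Fin d) ℂ :=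
  Matrix.single p p 1 + Matrix.single p q 1 + Matrix.single q p 1 - Matrix.single q q 1

/-- `E p p + E q q`. -/
noncomputable def hadP : Matrix (Fin d) (Fin d) ℂ :=
  Matrix.single p p 1 + Matrix.single q q 1

variable {p q}

lemma stdE_star (a b : Fin d) :
    star (Matrix.single a b (1:ℂ)) = Matrix.single b a 1 := by
  ext i j
  simp only [Matrix.star_apply, Matrix.single, Matrix.of_apply]
  by_cases h1 : b = i <;> by_cases h2 : a = j <;> simp [h1, h2, and_comm]

lemma hadA_star : star (hadA p q) = hadA p q := by
  rw [hadA, star_sub, star_add, star_add, stdE_star, stdE_star, stdE_star, stdE_star]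
  abel

lemma hadP_star : star (hadP p q) = hadP p q := by
  rw [hadP, star_add, stdE_star, stdE_star]

lemma hadA_mul_A (hpq : p ≠ q) : hadA p q * hadA p q = (2:ℂ) • hadP p q := by
  rw [hadA, hadP]
  simp only [mul_add, add_mul, mul_sub, sub_mul, Matrix.single_mul_single_same,
    ne_eq, Matrix.single_mul_single_of_ne, hpq, hpq.symm, not_false_iff, one_mul]
  module

lemma hadA_mul_P (hpq : p ≠ q) : hadA p q * hadP p q = hadA p q := by
  rw [hadA, hadP]
  simp only [mul_add, add_mul, mul_sub, sub_mul, Matrix.single_mul_single_same,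
    ne_eq, Matrix.single_mul_single_of_ne, hpq, hpq.symm, not_false_iff, one_mul]
  module

lemma hadP_mul_A (hpq : p ≠ q) : hadP p q * hadA p q = hadA p q := by
  rw [hadA, hadP]
  simp only [mul_add, add_mul, mul_sub, sub_mul, Matrix.single_mul_single_same,
    ne_eq, Matrix.single_mul_single_of_ne, hpq, hpq.symm, not_false_iff, one_mul]
  module

lemma hadP_mul_P (hpq : p ≠ q) : hadP p q * hadP p q = hadP p q := by
  rw [hadP]
  simp only [mul_add, add_mul, Matrix.single_mul_single_same,
    ne_eq, Matrix.single_mul_single_of_ne, hpq, hpq.symm, not_false_iff, one_mul]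
  module

/-- The 2×2-block Hadamard rotation embedded at coordinates `p ≠ q`. -/
noncomputable def hadU (p q : Fin d) (hpq : p ≠ q) : Matrix.unitaryGroup (Fin d) ℂ :=
  ⟨(((Real.sqrt 2)⁻¹ : ℝ) : ℂ) • hadA p q + (1 - hadP p q), by
    rw [Matrix.mem_unitaryGroup_iff']
    set s : ℂ := (((Real.sqrt 2)⁻¹ : ℝ) : ℂ) with hsdef
    have hs : star s = s := Complex.conj_ofReal _
    have hstar : star (s • hadA p q + (1 - hadP p q)) = s • hadA p q + (1 - hadP p q) := by
      rw [star_add, star_smul, hs, hadA_star, star_sub, star_one, hadP_star]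
    rw [hstar]
    have hr : ((Real.sqrt 2)⁻¹ * (Real.sqrt 2)⁻¹ * 2 : ℝ) = 1 := by
      rw [← mul_inv, Real.mul_self_sqrt (by norm_num : (0:ℝ) ≤ 2)]
      norm_num
    have hs2 : s * s * 2 = 1 := by
      rw [hsdef, show ((2:ℂ)) = ((2:ℝ) : ℂ) by norm_num, ← Complex.ofReal_mul,
        ← Complex.ofReal_mul, hr, Complex.ofReal_one]
    have hAP : hadA p q * (1 - hadP p q) = 0 := by
      rw [mul_sub, mul_one, hadA_mul_P hpq, sub_self]
    have hPA : (1 - hadP p q) * hadA p q = 0 := by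
      rw [sub_mul, one_mul, hadP_mul_A hpq, sub_self]
    have hPP : (1 - hadP p q) * (1 - hadP p q) = 1 - hadP p q := by
      simp only [mul_sub, sub_mul, one_mul, mul_one, hadP_mul_P hpq]
      abel
    simp only [add_mul, mul_add, smul_mul_assoc, mul_smul_comm, hadA_mul_A hpq, hAP, hPA, hPP,
      smul_zero, add_zero, zero_add]
    rw [smul_smul, smul_smul, hs2, one_smul]
    abel⟩

lemma hadU_mul_apply_p (hpq : p ≠ q) (U : Matrix.unitaryGroup (Fin d) ℂ) (z : Fin d) :
    ((hadU p q hpq * U : Matrix.unitaryGroup (Fin d) ℂ) : Matrix (Fin d) (Fin d) ℂ) p z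
      = (((Real.sqrt 2)⁻¹ : ℝ) : ℂ) *
        ((U : Matrix (Fin d) (Fin d) ℂ) p z + (U : Matrix (Fin d) (Fin d) ℂ) q z) := by
  show ((hadU p q hpq).1 * (U : Matrix (Fin d) (Fin d) ℂ)) p z = _
  rw [hadU]
  simp [Matrix.add_mul, Matrix.sub_mul, Matrix.smul_mul, hadA, hadP,
    Matrix.add_apply, Matrix.sub_apply, Matrix.smul_apply,
    Matrix.single_mul_apply_same,
    Matrix.single_mul_apply_of_ne, hpq, hpq.symm, smul_eq_mul]

lemma hadU_mul_apply_q (hpq : p ≠ q) (U : Matrix.unitaryGroup (Fin d) ℂ) (z : Fin d) :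
    ((hadU p q hpq * U : Matrix.unitaryGroup (Fin d) ℂ) : Matrix (Fin d) (Fin d) ℂ) q z
      = (((Real.sqrt 2)⁻¹ : ℝ) : ℂ) *
        ((U : Matrix (Fin d) (Fin d) ℂ) p z - (U : Matrix (Fin d) (Fin d) ℂ) q z) := by
  show ((hadU p q hpq).1 * (U : Matrix (Fin d) (Fin d) ℂ)) q z = _
  rw [hadU]
  simp [Matrix.add_mul, Matrix.sub_mul, Matrix.smul_mul, hadA, hadP,
    Matrix.add_apply, Matrix.sub_apply, Matrix.smul_apply,
    Matrix.single_mul_apply_same,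
    Matrix.single_mul_apply_of_ne, hpq, hpq.symm, smul_eq_mul]

/-- The phase unitary multiplying coordinate `q` by `I`. -/
noncomputable def phaseU (q : Fin d) : Matrix.unitaryGroup (Fin d) ℂ :=
  ⟨1 + (Complex.I - 1) • Matrix.single q q 1, by
    rw [Matrix.mem_unitaryGroup_iff']
    have hstar : star ((1 : Matrix (Fin d) (Fin d) ℂ) + (Complex.I - 1) • Matrix.single q q 1)
        = 1 + (-Complex.I - 1) • Matrix.single q q 1 := by
      rw [star_add, star_one, star_smul, stdE_star]
      congr 1
      congr 1
      simp [Complex.conj_I, sub_eq_add_neg]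
    rw [hstar]
    rw [mul_add, mul_one, add_mul, one_mul, smul_mul_assoc, mul_smul_comm, smul_smul,
      Matrix.single_mul_single_same, mul_one]
    rw [add_assoc, ← add_smul, ← add_smul,
      show (-Complex.I - 1) + ((Complex.I - 1) + (-Complex.I - 1) * (Complex.I - 1)) = 0 from by
        linear_combination -Complex.I_mul_I,
      zero_smul, add_zero]⟩

lemma phaseU_mul_apply_ne (q : Fin d) (U : Matrix.unitaryGroup (Fin d) ℂ) {i : Fin d}
    (hi : i ≠ q) (z : Fin d) :
    ((phaseU q * U : Matrix.unitaryGroup (Fin d) ℂ) : Matrix (Fin d) (Fin d) ℂ) i z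
      = (U : Matrix (Fin d) (Fin d) ℂ) i z := by
  show ((phaseU q).1 * (U : Matrix (Fin d) (Fin d) ℂ)) i z = _
  rw [phaseU]
  simp [Matrix.add_mul, Matrix.smul_mul, Matrix.add_apply, Matrix.smul_apply,
    Matrix.single_mul_apply_of_ne, hi]

lemma phaseU_mul_apply_q (q : Fin d) (U : Matrix.unitaryGroup (Fin d) ℂ) (z : Fin d) :
    ((phaseU q * U : Matrix.unitaryGroup (Fin d) ℂ) : Matrix (Fin d) (Fin d) ℂ) q z
      = Complex.I * (U : Matrix (Fin d) (Fin d) ℂ) q z := by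
  show ((phaseU q).1 * (U : Matrix (Fin d) (Fin d) ℂ)) q z = _
  rw [phaseU]
  simp [Matrix.add_mul, Matrix.smul_mul, Matrix.add_apply, Matrix.smul_apply,
    Matrix.single_mul_apply_same, smul_eq_mul]
  ring

end had


lemma trace_cov {d : ℕ} (z : Fin d) (U : Matrix.unitaryGroup (Fin d) ℂ)
    (M : Matrix (Fin d) (Fin d) ℂ) :
    Matrix.trace (covProj d z U * M)
      = ((star (U : Matrix (Fin d) (Fin d) ℂ)) * M * (U : Matrix (Fin d) (Fin d) ℂ)) z z := by
  rw [covProj, Matrix.mul_assoc, Matrix.mul_assoc, Matrix.trace_mul_comm, Matrix.mul_assoc]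
  set N := (star (U : Matrix (Fin d) (Fin d) ℂ)) * M * (U : Matrix (Fin d) (Fin d) ℂ) with hN
  show Matrix.trace (Matrix.single z z 1 * N) = N z z
  rw [Matrix.trace]
  rw [Finset.sum_eq_single z
    (fun k _ hk => by
      simp [Matrix.diag, Matrix.single_mul_apply_of_ne, hk])
    (fun h => absurd (Finset.mem_univ z) h)]
  simp [Matrix.diag]

end CovAux

/-- Up to the factor `d/(d+1)`, the covariant measurement map is an isometry on
traceless Hermitian matrices: `d²·∫ (Tr(U E₁₁ U* · X))² dU = (d/(d+1))·Tr(X²)`. -/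
theorem covariant_map_isometry_traceless
    (d : ℕ) (hd : 0 < d)
    (μ : Measure (Matrix.unitaryGroup (Fin d) ℂ)) [IsProbabilityMeasure μ]
    (hμ : ∀ V : Matrix.unitaryGroup (Fin d) ℂ, μ.map (fun U => V * U) = μ)
    (X : Matrix (Fin d) (Fin d) ℂ) (hX : X.IsHermitian) (htr : X.trace = 0) :
    (d : ℝ) ^ 2 * ∫ U, (Matrix.trace (covProj d ⟨0, hd⟩ U * X)).re ^ 2 ∂μ
      = ((d : ℝ) / ((d : ℝ) + 1)) * (Matrix.trace (X * X)).re := by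
  classical
  by_cases hd2 : 2 ≤ d
  case neg =>
    have hd1 : d = 1 := by omega
    subst hd1
    have hX0 : X = 0 := by
      have h00 : X 0 0 = 0 := by
        have htr' : X.trace = X 0 0 := by
          simp [Matrix.trace, Matrix.diag]
        rw [htr'] at htr
        exact htr
      ext i j
      have hi : i = 0 := Subsingleton.elim _ _
      have hj : j = 0 := Subsingleton.elim _ _
      rw [hi, hj, h00, Matrix.zero_apply]
    rw [hX0]
    simp
  case pos =>
  have h1d : 1 < d := hd2
  set z : Fin d := ⟨0, hd⟩ with hzdef
  set q1 : Fin d := ⟨1, h1d⟩ with hq1def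
  have hzq : z ≠ q1 := by simp [hzdef, hq1def, Fin.ext_iff]
  set lam : Fin d → ℝ := hX.eigenvalues with hlam
  set W := hX.eigenvectorUnitary with hWdef
  set m : Fin d → Fin d → ℝ := fun i j => ∫ U, CovAux.phi z i U * CovAux.phi z j U ∂μ with hm
  have hmeas_pp : ∀ i j : Fin d, Measurable fun U => CovAux.phi z i U * CovAux.phi z j U :=
    fun i j => (CovAux.meas_phi z i).mul (CovAux.meas_phi z j)
  have hbdd_pp : ∀ (i j : Fin d) (U : Matrix.unitaryGroup (Fin d) ℂ),
      ‖CovAux.phi z i U * CovAux.phi z j U‖ ≤ 1 := by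
    intro i j U
    rw [Real.norm_eq_abs,
      abs_of_nonneg (mul_nonneg (CovAux.phi_nonneg _ _ _) (CovAux.phi_nonneg _ _ _))]
    exact mul_le_one₀ (CovAux.phi_le_one _ _ _) (CovAux.phi_nonneg _ _ _) (CovAux.phi_le_one _ _ _)
  have hint_pp : ∀ i j : Fin d, Integrable (fun U => CovAux.phi z i U * CovAux.phi z j U) μ :=
    fun i j => CovAux.integrable_bdd μ (hmeas_pp i j) (hbdd_pp i j)
  -- permutation invariance of the moments
  have hperm : ∀ (σ : Equiv.Perm (Fin d)) (i j : Fin d), m (σ i) (σ j) = m i j := by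
    intro σ i j
    have h := CovAux.integral_rotate μ hμ (CovAux.permU σ) (hmeas_pp (σ i) (σ j))
    rw [hm]
    dsimp only
    rw [h]
    congr 1
    funext U
    rw [CovAux.phi_permU, CovAux.phi_permU, Equiv.Perm.inv_def, Equiv.symm_apply_apply,
      Equiv.symm_apply_apply]
  have hdiag : ∀ i : Fin d, m i i = m z z := by
    intro i
    have h := hperm (Equiv.swap z i) z z
    rwa [Equiv.swap_apply_left] at h
  have hoff : ∀ i j : Fin d, i ≠ j → m i j = m z q1 := by
    intro i j hij
    set τ : Equiv.Perm (Fin d) := Equiv.swap z i with hτ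
    set k : Fin d := τ j with hk
    have hτk : τ k = j := by rw [hk]; exact Equiv.swap_apply_self _ _ _
    have hkz : k ≠ z := by
      intro h
      apply hij
      have : τ k = τ z := by rw [h]
      rw [hτk, Equiv.swap_apply_left] at this
      exact this.symm
    set σ : Equiv.Perm (Fin d) := (Equiv.swap q1 k).trans τ with hσ
    have hσz : σ z = i := by
      rw [hσ]
      simp only [Equiv.trans_apply]
      rw [Equiv.swap_apply_of_ne_of_ne hzq hkz.symm, Equiv.swap_apply_left]
    have hσq : σ q1 = j := by
      rw [hσ]
      simp only [Equiv.trans_apply]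
      rw [Equiv.swap_apply_left, hτk]
    have h := hperm σ z q1
    rwa [hσz, hσq] at h
  -- normalization
  have hnorm : ∑ i : Fin d, ∑ j : Fin d, m i j = 1 := by
    have hIntInner : ∀ i : Fin d,
        Integrable (fun U => ∑ j, CovAux.phi z i U * CovAux.phi z j U) μ :=
      fun i => integrable_finset_sum _ fun j _ => hint_pp i j
    have hpt : ∀ U : Matrix.unitaryGroup (Fin d) ℂ,
        (∑ i, ∑ j, CovAux.phi z i U * CovAux.phi z j U) = 1 := by
      intro U
      rw [← Finset.sum_mul_sum, CovAux.phi_sum z U, one_mul]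
    rw [hm]
    dsimp only
    calc ∑ i : Fin d, ∑ j : Fin d, ∫ U, CovAux.phi z i U * CovAux.phi z j U ∂μ
        = ∑ i : Fin d, ∫ U, ∑ j, CovAux.phi z i U * CovAux.phi z j U ∂μ := by
          refine Finset.sum_congr rfl fun i _ => ?_
          rw [integral_finset_sum _ fun j _ => hint_pp i j]
      _ = ∫ U, ∑ i, ∑ j, CovAux.phi z i U * CovAux.phi z j U ∂μ := by
          rw [integral_finset_sum _ fun i _ => hIntInner i]
      _ = ∫ _U, (1:ℝ) ∂μ := by
          congr 1
          funext U
          exact hpt U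
      _ = 1 := by simp
  -- the key relation `m z z = 2 * m z q1`
  have hφ2 : ∀ i : Fin d, (∫ U, CovAux.phi z i U ^ 2 ∂μ) = m i i := by
    intro i
    rw [hm]
    dsimp only
    congr 1
    funext U
    rw [pow_two]
  have hkey : m z z = 2 * m z q1 := by
    set V1 := CovAux.hadU z q1 hzq with hV1
    set Ph := CovAux.phaseU q1 with hPh
    have h1 : m z q1 = ∫ U, CovAux.phi z z (V1 * U) * CovAux.phi z q1 (V1 * U) ∂μ :=
      CovAux.integral_rotate μ hμ V1 (hmeas_pp z q1)
    have h2 : m z q1 = ∫ U, CovAux.phi z z (V1 * Ph * U) * CovAux.phi z q1 (V1 * Ph * U) ∂μ :=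
      CovAux.integral_rotate μ hμ (V1 * Ph) (hmeas_pp z q1)
    have hintr1 : Integrable (fun U => CovAux.phi z z (V1 * U) * CovAux.phi z q1 (V1 * U)) μ :=
      CovAux.integrable_bdd μ ((hmeas_pp z q1).comp (CovAux.meas_mul_left V1))
        fun U => hbdd_pp z q1 _
    have hintr2 : Integrable
        (fun U => CovAux.phi z z (V1 * Ph * U) * CovAux.phi z q1 (V1 * Ph * U)) μ :=
      CovAux.integrable_bdd μ ((hmeas_pp z q1).comp (CovAux.meas_mul_left (V1 * Ph)))
        fun U => hbdd_pp z q1 _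
    have hs2 : (Real.sqrt 2)⁻¹ * (Real.sqrt 2)⁻¹ = 2⁻¹ := by
      rw [← mul_inv, Real.mul_self_sqrt (by norm_num : (0:ℝ) ≤ 2)]
    have hpt : ∀ U : Matrix.unitaryGroup (Fin d) ℂ,
        CovAux.phi z z (V1 * U) * CovAux.phi z q1 (V1 * U)
          + CovAux.phi z z (V1 * Ph * U) * CovAux.phi z q1 (V1 * Ph * U)
        = (CovAux.phi z z U ^ 2 + CovAux.phi z q1 U ^ 2) / 2 := by
      intro U
      have e1 := CovAux.hadU_mul_apply_p hzq U z
      have e2 := CovAux.hadU_mul_apply_q hzq U z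
      have e3 := CovAux.hadU_mul_apply_p hzq (Ph * U) z
      have e4 := CovAux.hadU_mul_apply_q hzq (Ph * U) z
      have e5 := CovAux.phaseU_mul_apply_ne q1 U hzq z
      have e6 := CovAux.phaseU_mul_apply_q q1 U z
      rw [show V1 * Ph * U = V1 * (Ph * U) from mul_assoc _ _ _]
      simp only [CovAux.phi, hV1, hPh] at e1 e2 e3 e4 e5 e6 ⊢
      rw [e1, e2, e3, e4, e5, e6]
      rw [Complex.normSq_mul, Complex.normSq_mul, Complex.normSq_mul, Complex.normSq_mul,
        Complex.normSq_ofReal, hs2]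
      simp only [Complex.normSq_apply, Complex.add_re, Complex.add_im, Complex.sub_re,
        Complex.sub_im, Complex.mul_re, Complex.mul_im, Complex.I_re, Complex.I_im]
      ring
    have hadd : m z q1 + m z q1
        = ∫ U, (CovAux.phi z z U ^ 2 + CovAux.phi z q1 U ^ 2) / 2 ∂μ := by
      refine (congrArg₂ (· + ·) h1 h2).trans ?_
      rw [← integral_add hintr1 hintr2]
      congr 1
      funext U
      exact hpt U
    have hsq_int : ∀ i : Fin d, Integrable (fun U => CovAux.phi z i U ^ 2) μ := by
      intro i
      have h := hint_pp i i
      refine h.congr ?_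
      filter_upwards with U
      rw [pow_two]
    have hval : ∫ U, (CovAux.phi z z U ^ 2 + CovAux.phi z q1 U ^ 2) / 2 ∂μ
        = (m z z + m q1 q1) / 2 := by
      rw [show (fun U => (CovAux.phi z z U ^ 2 + CovAux.phi z q1 U ^ 2) / 2)
          = fun U => (2:ℝ)⁻¹ * (CovAux.phi z z U ^ 2 + CovAux.phi z q1 U ^ 2) from by
        funext U; ring]
      rw [integral_const_mul, integral_add (hsq_int z) (hsq_int q1), hφ2, hφ2]
      ring
    have := hadd.trans hval
    rw [hdiag q1] at this
    linarith
  -- total mass identity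
  have hrow : ∀ i : Fin d, ∑ j, m i j = m z z + ((d:ℝ) - 1) * m z q1 := by
    intro i
    rw [← Finset.add_sum_erase Finset.univ (m i) (Finset.mem_univ i), hdiag i]
    congr 1
    rw [Finset.sum_congr rfl fun j hj => hoff i j (Finset.mem_erase.mp hj).1.symm]
    rw [Finset.sum_const, Finset.card_erase_of_mem (Finset.mem_univ i), Finset.card_univ,
      Fintype.card_fin, nsmul_eq_mul, Nat.cast_sub (by omega : 1 ≤ d), Nat.cast_one]
  have htot : (d:ℝ) * (m z z + ((d:ℝ) - 1) * m z q1) = 1 := by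
    calc (d:ℝ) * (m z z + ((d:ℝ) - 1) * m z q1)
        = ∑ _i : Fin d, (m z z + ((d:ℝ) - 1) * m z q1) := by
          rw [Finset.sum_const, Finset.card_univ, Fintype.card_fin, nsmul_eq_mul]
      _ = ∑ i : Fin d, ∑ j, m i j := Finset.sum_congr rfl fun i _ => (hrow i).symm
      _ = 1 := hnorm
  have hceq : (d:ℝ) * ((d:ℝ) + 1) * m z q1 = 1 := by
    linear_combination htot - (d:ℝ) * hkey
  -- spectral data
  have hWmem : (W : Matrix (Fin d) (Fin d) ℂ) ∈ Matrix.unitaryGroup (Fin d) ℂ := W.2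
  have hspec : star (W : Matrix (Fin d) (Fin d) ℂ) * X * (W : Matrix (Fin d) (Fin d) ℂ)
      = Matrix.diagonal (RCLike.ofReal ∘ hX.eigenvalues) := by
    have h := hX.conjStarAlgAut_star_eigenvectorUnitary
    rw [Unitary.conjStarAlgAut_star_apply] at h
    exact h
  have hdiagC : (Matrix.diagonal (RCLike.ofReal ∘ hX.eigenvalues) : Matrix (Fin d) (Fin d) ℂ)
      = Matrix.diagonal (fun i => (lam i : ℂ)) := rfl
  have hWW : star (W : Matrix (Fin d) (Fin d) ℂ) * (W : Matrix (Fin d) (Fin d) ℂ) = 1 :=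
    Unitary.star_mul_self_of_mem hWmem
  have hWW' : (W : Matrix (Fin d) (Fin d) ℂ) * star (W : Matrix (Fin d) (Fin d) ℂ) = 1 :=
    Unitary.mul_star_self_of_mem hWmem
  have hlam0 : ∑ i, lam i = 0 := by
    have h1 : Matrix.trace (star (W : Matrix (Fin d) (Fin d) ℂ) * X *
        (W : Matrix (Fin d) (Fin d) ℂ)) = Matrix.trace X := by
      rw [Matrix.trace_mul_cycle, hWW', Matrix.one_mul]
    rw [hspec, hdiagC, Matrix.trace_diagonal, htr] at h1
    have h2 : ((∑ i, lam i : ℝ) : ℂ) = 0 := by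
      push_cast
      exact h1
    exact_mod_cast h2
  have hXX : X * X = (W : Matrix (Fin d) (Fin d) ℂ) *
      (Matrix.diagonal (fun i => (lam i : ℂ)) * Matrix.diagonal (fun i => (lam i : ℂ))) *
      star (W : Matrix (Fin d) (Fin d) ℂ) := by
    conv_lhs => rw [hX.spectral_theorem, Unitary.conjStarAlgAut_apply, hdiagC]
    set D := Matrix.diagonal (fun i => (lam i : ℂ)) with hD
    calc ((W : Matrix (Fin d) (Fin d) ℂ) * D * star (W : Matrix (Fin d) (Fin d) ℂ)) *
          ((W : Matrix (Fin d) (Fin d) ℂ) * D * star (W : Matrix (Fin d) (Fin d) ℂ))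
        = (W : Matrix (Fin d) (Fin d) ℂ) * D *
            (star (W : Matrix (Fin d) (Fin d) ℂ) * (W : Matrix (Fin d) (Fin d) ℂ)) *
            (D * star (W : Matrix (Fin d) (Fin d) ℂ)) := by
          noncomm_ring
      _ = (W : Matrix (Fin d) (Fin d) ℂ) * (D * D) * star (W : Matrix (Fin d) (Fin d) ℂ) := by
          rw [hWW, Matrix.mul_one]
          noncomm_ring
  have htrsq : (Matrix.trace (X * X)).re = ∑ i, lam i ^ 2 := by
    have h1 : Matrix.trace (X * X) = ∑ i, ((lam i : ℂ)) ^ 2 := by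
      rw [hXX, Matrix.trace_mul_cycle, ← Matrix.mul_assoc, hWW, Matrix.one_mul,
        Matrix.diagonal_mul_diagonal, Matrix.trace_diagonal]
      refine Finset.sum_congr rfl fun i _ => ?_
      rw [pow_two]
    have h2 : (((∑ i, lam i ^ 2 : ℝ)) : ℂ) = ∑ i, ((lam i : ℂ)) ^ 2 := by push_cast; rfl
    rw [h1, ← h2, Complex.ofReal_re]
  -- rotate the integrand to the diagonal case
  set g : Matrix.unitaryGroup (Fin d) ℂ → ℝ := fun U => ∑ i, lam i * CovAux.phi z i U with hg
  have hg_meas : Measurable g :=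
    Finset.measurable_sum _ fun i _ => (CovAux.meas_phi z i).const_mul _
  have hrot : ∀ U : Matrix.unitaryGroup (Fin d) ℂ,
      (Matrix.trace (covProj d z (W * U) * X)).re = g U := by
    intro U
    rw [CovAux.trace_cov]
    have hcoe : ((W * U : Matrix.unitaryGroup (Fin d) ℂ) : Matrix (Fin d) (Fin d) ℂ)
        = (W : Matrix (Fin d) (Fin d) ℂ) * (U : Matrix (Fin d) (Fin d) ℂ) := rfl
    rw [hcoe, StarMul.star_mul]
    have hre : star (U : Matrix (Fin d) (Fin d) ℂ) * star (W : Matrix (Fin d) (Fin d) ℂ) * X *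
          ((W : Matrix (Fin d) (Fin d) ℂ) * (U : Matrix (Fin d) (Fin d) ℂ))
        = star (U : Matrix (Fin d) (Fin d) ℂ) *
            (star (W : Matrix (Fin d) (Fin d) ℂ) * X * (W : Matrix (Fin d) (Fin d) ℂ)) *
            (U : Matrix (Fin d) (Fin d) ℂ) := by
      noncomm_ring
    rw [hre, hspec, hdiagC, Matrix.mul_assoc, Matrix.mul_apply, Complex.re_sum]
    rw [hg]
    dsimp only
    refine Finset.sum_congr rfl fun k _ => ?_
    rw [Matrix.star_apply, Matrix.diagonal_mul]
    have heq : (star ((U : Matrix (Fin d) (Fin d) ℂ) k z)) *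
          ((lam k : ℂ) * (U : Matrix (Fin d) (Fin d) ℂ) k z)
        = ((lam k * CovAux.phi z k U : ℝ) : ℂ) := by
      simp only [CovAux.phi, Complex.star_def]
      push_cast
      linear_combination (-(lam k : ℂ)) *
        (Complex.normSq_eq_conj_mul_self (z := (U : Matrix (Fin d) (Fin d) ℂ) k z))
    rw [heq, Complex.ofReal_re]
  have hrot' : ∀ U : Matrix.unitaryGroup (Fin d) ℂ,
      (Matrix.trace (covProj d z U * X)).re = g (W⁻¹ * U) := by
    intro U
    have h := hrot (W⁻¹ * U)
    rwa [← mul_assoc, mul_inv_cancel, one_mul] at h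
  -- compute the integral
  have hmain : ∫ U, (Matrix.trace (covProj d z U * X)).re ^ 2 ∂μ
      = ∑ i, ∑ j, lam i * lam j * m i j := by
    have step1 : ∫ U, (Matrix.trace (covProj d z U * X)).re ^ 2 ∂μ
        = ∫ U, (fun V => g V ^ 2) (W⁻¹ * U) ∂μ := by
      congr 1
      funext U
      rw [hrot' U]
    rw [step1, ← CovAux.integral_rotate μ hμ W⁻¹ (hg_meas.pow_const 2)]
    have hgexp : (fun U => g U ^ 2)
        = fun U => ∑ i, ∑ j, lam i * lam j * (CovAux.phi z i U * CovAux.phi z j U) := by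
      funext U
      rw [hg]
      dsimp only
      rw [pow_two, Finset.sum_mul_sum]
      exact Finset.sum_congr rfl fun i _ => Finset.sum_congr rfl fun j _ => by ring
    rw [hgexp]
    rw [integral_finset_sum _ fun i _ =>
      integrable_finset_sum _ fun j _ => (hint_pp i j).const_mul _]
    refine Finset.sum_congr rfl fun i _ => ?_
    rw [integral_finset_sum _ fun j _ => (hint_pp i j).const_mul _]
    refine Finset.sum_congr rfl fun j _ => ?_
    rw [integral_const_mul]
  -- sum over eigenvalues
  have hinner : ∀ i : Fin d, ∑ j, lam i * lam j * m i j
      = (m z z - m z q1) * lam i ^ 2 := by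
    intro i
    have hsum_erase : ∑ j ∈ Finset.univ.erase i, lam j = - lam i := by
      have h := hlam0
      rw [← Finset.add_sum_erase Finset.univ lam (Finset.mem_univ i)] at h
      linarith
    rw [← Finset.add_sum_erase Finset.univ _ (Finset.mem_univ i), hdiag i]
    have hoffsum : ∑ j ∈ Finset.univ.erase i, lam i * lam j * m i j
        = (lam i * m z q1) * ∑ j ∈ Finset.univ.erase i, lam j := by
      rw [Finset.mul_sum]
      refine Finset.sum_congr rfl fun j hj => ?_
      rw [hoff i j (Finset.mem_erase.mp hj).1.symm]
      ring
    rw [hoffsum, hsum_erase]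
    ring
  rw [hmain, htrsq]
  rw [Finset.sum_congr rfl fun i (_ : i ∈ Finset.univ) => hinner i]
  rw [← Finset.mul_sum]
  have hac : m z z - m z q1 = m z q1 := by linarith
  rw [hac]
  have hdne : ((d:ℝ) + 1) ≠ 0 := by positivity
  have hdne0 : (d:ℝ) ≠ 0 := by
    simp only [ne_eq, Nat.cast_eq_zero]
    omega
  field_simp
  linear_combination (∑ i, lam i ^ 2) * hceq
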